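/- For every n≥3 there exist real numbers a and b such that the n×n cycle matrix M_n (diagonal 2, off-diagonal 1's except (n−1,n)-entry b, corner entry a) is positive definite, but the matrix obtained by setting the corner entries a to zero is not positive definite. -/

import Mathlib

open Finset Matrix

set_option linter.unusedVariables false

/-- The symmetric matrix supported on the cycle `C_n` with diagonal `2`, off-diagonal
entries `1` except the `(n-1,n)` entry which is `b`, and corner entries `a`. -/
def cycleMatrix (n : ℕ) (a b : ℝ) : Matrix (Fin n) (Fin n) ℝ :=
  Matrix.of fun i j =>
    if i = j then 2
    else if (i : ℕ) + 1 = (j : ℕ) ∨ (j : ℕ) + 1 = (i : ℕ) then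
      (if (i : ℕ) = n - 1 ∨ (j : ℕ) = n - 1 then b else 1)
    else if ((i : ℕ) = 0 ∧ (j : ℕ) = n - 1) ∨ ((j : ℕ) = 0 ∧ (i : ℕ) = n - 1) then a
    else 0

noncomputable def mEnt (n : ℕ) (a b : ℝ) (i j : ℕ) : ℝ :=
  if i = j then 2
  else if i + 1 = j ∨ j + 1 = i then (if i = n - 1 ∨ j = n - 1 then b else 1)
  else if (i = 0 ∧ j = n - 1) ∨ (j = 0 ∧ i = n - 1) then a
  else 0

lemma cycleMatrix_eq_mEnt (n : ℕ) (a b : ℝ) (i j : Fin n) :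
    cycleMatrix n a b i j = mEnt n a b (i : ℕ) (j : ℕ) := by
  simp [cycleMatrix, mEnt, Fin.ext_iff]

noncomputable def uEnt (n : ℕ) (a b : ℝ) (i j : ℕ) : ℝ :=
  (if i + 1 = j then (if j = n - 1 then b else 1) else 0)
  + (if i = 0 ∧ j = n - 1 then a else 0)

lemma mEnt_decomp (n : ℕ) (hn : 3 ≤ n) (a b : ℝ) (i j : ℕ) (hi : i < n) (hj : j < n) :
    mEnt n a b i j = 2 * (if i = j then 1 else 0) + uEnt n a b i j + uEnt n a b j i := by
  unfold mEnt uEnt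
  split_ifs
  all_goals try ring
  all_goals (exfalso; omega)

/-- The quadratic form of the cycle matrix, on `ℕ`-indexed data. -/
noncomputable def Qf (n : ℕ) (a b : ℝ) (z : ℕ → ℝ) : ℝ :=
  2 * ∑ i ∈ range n, (z i)^2 + 2 * ∑ i ∈ range (n-2), z i * z (i+1)
    + 2 * b * z (n-2) * z (n-1) + 2 * a * z 0 * z (n-1)

lemma uEnt_row (n : ℕ) (hn : 3 ≤ n) (a b : ℝ) (z : ℕ → ℝ) (i : ℕ) (hi : i < n) :
    ∑ j ∈ range n, uEnt n a b i j * z j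
      = (if i + 1 < n then (if i + 1 = n - 1 then b else 1) * z (i+1) else 0)
        + (if i = 0 then a * z (n-1) else 0) := by
  unfold uEnt
  simp only [add_mul]
  rw [Finset.sum_add_distrib]
  congr 1
  · have h1 : ∀ j ∈ range n, (if i + 1 = j then (if j = n - 1 then b else 1) else 0) * z j
        = if i + 1 = j then (if j = n - 1 then b else 1) * z j else 0 := by
      intro j hj; split_ifs <;> ring
    rw [Finset.sum_congr rfl h1, Finset.sum_ite_eq]
    simp [Finset.mem_range]
  · by_cases h0 : i = 0
    · subst h0
      have h1 : ∀ j ∈ range n, (if 0 = 0 ∧ j = n - 1 then a else 0) * z j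
          = if n - 1 = j then a * z j else 0 := by
        intro j hj; simp only [true_and]
        by_cases h : j = n - 1
        · subst h; rw [if_pos rfl, if_pos rfl]
        · rw [if_neg h, if_neg (fun hh => h hh.symm), zero_mul]
      rw [Finset.sum_congr rfl h1, Finset.sum_ite_eq]
      rw [if_pos (Finset.mem_range.2 (by omega)), if_pos rfl]
    · rw [if_neg h0]
      exact Finset.sum_eq_zero fun j _ => by simp [h0]

/-- extension of `x : Fin n → ℝ` to `ℕ`. -/
noncomputable def zf (n : ℕ) (x : Fin n → ℝ) (i : ℕ) : ℝ :=
  if h : i < n then x ⟨i, h⟩ else 0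

lemma zf_coe (n : ℕ) (x : Fin n → ℝ) (i : Fin n) : x i = zf n x (i : ℕ) := by
  simp [zf, i.isLt]

lemma form_eq_Qf (n : ℕ) (hn : 3 ≤ n) (a b : ℝ) (x : Fin n → ℝ) :
    x ⬝ᵥ (cycleMatrix n a b *ᵥ x) = Qf n a b (zf n x) := by
  set z := zf n x with hzdef
  have step1 : x ⬝ᵥ (cycleMatrix n a b *ᵥ x)
      = ∑ i ∈ range n, z i * ∑ j ∈ range n, mEnt n a b i j * z j := by
    rw [dotProduct]
    rw [show (∑ i, x i * (cycleMatrix n a b *ᵥ x) i)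
        = ∑ i : Fin n, (fun k => z k * ∑ j ∈ range n, mEnt n a b k j * z j) (i : ℕ) from
      Finset.sum_congr rfl fun i _ => by
        simp only [mulVec, dotProduct]
        rw [show (∑ j, cycleMatrix n a b i j * x j)
            = ∑ j : Fin n, (fun k => mEnt n a b (i : ℕ) k * z k) (j : ℕ) from
          Finset.sum_congr rfl fun j _ => by
            rw [cycleMatrix_eq_mEnt, zf_coe n x j]]
        rw [zf_coe n x i]
        congr 1
        exact Fin.sum_univ_eq_sum_range (fun k => mEnt n a b (i : ℕ) k * z k) n]
    exact Fin.sum_univ_eq_sum_range (fun k => z k * ∑ j ∈ range n, mEnt n a b k j * z j) n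
  rw [step1]
  have step2 : ∀ i ∈ range n, z i * ∑ j ∈ range n, mEnt n a b i j * z j
      = 2 * (z i)^2 + z i * (∑ j ∈ range n, uEnt n a b i j * z j)
        + z i * (∑ j ∈ range n, uEnt n a b j i * z j) := by
    intro i hi
    rw [Finset.sum_congr rfl fun j hj => by
      rw [mEnt_decomp n hn a b i j (Finset.mem_range.1 hi) (Finset.mem_range.1 hj)]]
    simp only [add_mul, Finset.sum_add_distrib, mul_add]
    congr 1
    · congr 1
      have : ∀ j ∈ range n, 2 * (if i = j then (1:ℝ) else 0) * z j
          = if i = j then 2 * z j else 0 := fun j _ => by split_ifs <;> ring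
      rw [Finset.sum_congr rfl this, Finset.sum_ite_eq, if_pos hi]
      ring
  rw [Finset.sum_congr rfl step2]
  simp only [Finset.sum_add_distrib]
  have swap : ∑ i ∈ range n, z i * (∑ j ∈ range n, uEnt n a b j i * z j)
      = ∑ i ∈ range n, z i * (∑ j ∈ range n, uEnt n a b i j * z j) := by
    have l : ∀ w ∈ range n, z w * (∑ j ∈ range n, uEnt n a b j w * z j)
        = ∑ j ∈ range n, z j * (uEnt n a b j w * z w) := by
      intro w _
      rw [Finset.mul_sum]
      exact Finset.sum_congr rfl fun j _ => by ring
    have r : ∀ w ∈ range n, z w * (∑ j ∈ range n, uEnt n a b w j * z j)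
        = ∑ j ∈ range n, z w * (uEnt n a b w j * z j) := by
      intro w _; rw [Finset.mul_sum]
    rw [Finset.sum_congr rfl l, Finset.sum_congr rfl r, Finset.sum_comm]
  rw [swap]
  -- now evaluate the u-rows
  have rows : ∑ i ∈ range n, z i * (∑ j ∈ range n, uEnt n a b i j * z j)
      = ∑ i ∈ range (n-2), z i * z (i+1) + b * z (n-2) * z (n-1) + a * z 0 * z (n-1) := by
    rw [Finset.sum_congr rfl fun i hi => by
      rw [uEnt_row n hn a b z i (Finset.mem_range.1 hi), mul_add]]
    rw [Finset.sum_add_distrib]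
    congr 1
    · obtain ⟨m, rfl⟩ : ∃ m, n = m + 3 := ⟨n - 3, by omega⟩
      rw [show m + 3 = (m + 2) + 1 from rfl, Finset.sum_range_succ]
      rw [if_neg (by omega)]
      rw [show (m + 2 : ℕ) = (m + 1) + 1 from rfl, Finset.sum_range_succ]
      rw [if_pos (by omega), if_pos (by omega)]
      have : ∀ i ∈ range (m+1), z i * (if i + 1 < m + 2 + 1 then
          (if i + 1 = m + 3 - 1 then b else 1) * z (i+1) else 0) = z i * z (i+1) := by
        intro i hi
        rw [if_pos (by simp at hi; omega), if_neg (by simp at hi; omega), one_mul]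
      rw [Finset.sum_congr rfl this]
      have h1 : m + 3 - 2 = m + 1 := by omega
      have h2 : m + 3 - 1 = m + 2 := by omega
      rw [h1, h2]
      ring
    · have : ∀ i ∈ range n, z i * (if i = 0 then a * z (n-1) else 0)
          = if i = 0 then z i * (a * z (n-1)) else 0 := fun i _ => by split_ifs <;> ring
      rw [Finset.sum_congr rfl this, Finset.sum_ite_eq', if_pos (Finset.mem_range.2 (by omega))]
      ring
  rw [rows, Qf, Finset.mul_sum]
  ring

noncomputable def ddf (k : ℕ) : ℝ := ((k:ℝ)+2)/((k:ℝ)+1)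
noncomputable def ccf (k : ℕ) : ℝ := ((k:ℝ)+1)/((k:ℝ)+2)
noncomputable def eef (a : ℝ) (k : ℕ) : ℝ := a*(-1)^k/((k:ℝ)+2)

noncomputable def sosTerm (n : ℕ) (a : ℝ) (z : ℕ → ℝ) (k : ℕ) : ℝ :=
  ddf k * (z k + ccf k * z (k+1) + eef a k * z (n-1))^2

set_option maxHeartbeats 1000000 in
lemma sos_invariant (n : ℕ) (hn : 3 ≤ n) (a b : ℝ) (z : ℕ → ℝ) :
    ∀ m, m ≤ n-2 → Qf n a b z = ∑ k ∈ range m, sosTerm n a z k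
      + ((m:ℝ)+2)/((m:ℝ)+1) * (z m)^2
      + 2 * ∑ i ∈ Finset.Ico (m+1) (n-1), (z i)^2
      + 2 * ∑ i ∈ Finset.Ico m (n-2), z i * z (i+1)
      + 2*b*z (n-2)*z (n-1)
      + 2*(a*(-1)^m/((m:ℝ)+1))*z m*z (n-1)
      + (2 - a^2*(m:ℝ)/((m:ℝ)+1))*z (n-1)^2 := by
  intro m
  induction m with
  | zero =>
    intro _
    have h1 : ∑ i ∈ range n, (z i)^2
        = (z 0)^2 + (∑ i ∈ Finset.Ico 1 (n-1), (z i)^2 + (z (n-1))^2) := by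
      rw [Finset.range_eq_Ico, Finset.sum_eq_sum_Ico_succ_bot (by omega : 0 < n)]
      congr 1
      rw [show n = (n-1)+1 by omega]
      rw [Finset.sum_Ico_succ_top (by omega : 1 ≤ n - 1)]
      congr 2 <;> omega
    rw [Qf, h1]
    simp only [Finset.range_zero, Finset.sum_empty, Nat.cast_zero, Finset.range_eq_Ico,
      Finset.Ico_self]
    ring
  | succ m ih =>
    intro hm
    rw [ih (by omega)]
    rw [Finset.sum_range_succ]
    rw [Finset.sum_eq_sum_Ico_succ_bot (by omega : m+1 < n-1) (fun i => (z i)^2)]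
    rw [Finset.sum_eq_sum_Ico_succ_bot (by omega : m < n-2) (fun i => z i * z (i+1))]
    have hterm : sosTerm n a z m = ((m:ℝ)+2)/((m:ℝ)+1)
        * (z m + ((m:ℝ)+1)/((m:ℝ)+2) * z (m+1) + a*(-1)^m/((m:ℝ)+2) * z (n-1))^2 := rfl
    rw [hterm]
    generalize (∑ k ∈ range m, sosTerm n a z k) = P
    generalize (∑ i ∈ Finset.Ico (m+1+1) (n-1), (z i)^2) = S1
    generalize (∑ i ∈ Finset.Ico (m+1) (n-2), z i * z (i+1)) = S2
    generalize z m = A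
    generalize z (m+1) = B
    generalize z (n-2) = W
    generalize z (n-1) = C
    simp only [pow_succ]
    push_cast
    have h1 : ((m:ℝ)+1) ≠ 0 := by positivity
    have h2 : ((m:ℝ)+2) ≠ 0 := by positivity
    rcases Nat.even_or_odd m with hpar | hpar
    · rw [hpar.neg_one_pow]
      field_simp
      ring
    · rw [hpar.neg_one_pow]
      field_simp
      ring

lemma sos_final (n : ℕ) (hn : 3 ≤ n) (a b : ℝ) (z : ℕ → ℝ) :
    Qf n a b z = ∑ k ∈ range (n-2), sosTerm n a z k
      + (n:ℝ)/((n:ℝ)-1) * (z (n-2) + (((n:ℝ)-1)*(b + a*(-1)^n/((n:ℝ)-1))/(n:ℝ)) * z (n-1))^2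
      + (2 - a^2*((n:ℝ)-2)/((n:ℝ)-1) - ((n:ℝ)-1)*(b + a*(-1)^n/((n:ℝ)-1))^2/(n:ℝ))
        * z (n-1)^2 := by
  have h := sos_invariant n hn a b z (n-2) le_rfl
  rw [h]
  have e1 : n-2+1 = n-1 := by omega
  rw [e1, Finset.Ico_self, Finset.Ico_self, Finset.sum_empty, Finset.sum_empty]
  have c1 : ((n-2:ℕ):ℝ) = (n:ℝ)-2 := by
    rw [Nat.cast_sub (by omega : 2 ≤ n)]; norm_num
  have c2 : (-1:ℝ)^n = (-1)^(n-2) := by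
    conv_lhs => rw [show n = (n-2)+2 by omega]
    rw [pow_add]; norm_num
  rw [c1, c2]
  have hν : (3:ℝ) ≤ (n:ℝ) := by exact_mod_cast hn
  have h1 : (n:ℝ) - 2 + 1 ≠ 0 := by nlinarith
  have h2 : (n:ℝ) - 2 + 2 ≠ 0 := by nlinarith
  have h3 : (n:ℝ) ≠ 0 := by nlinarith
  have h4 : (n:ℝ) - 1 ≠ 0 := by nlinarith
  field_simp
  ring

lemma mEnt_symm (n : ℕ) (a b : ℝ) (i j : ℕ) : mEnt n a b i j = mEnt n a b j i := by
  unfold mEnt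
  split_ifs
  all_goals try rfl
  all_goals (exfalso; omega)

lemma cycleMatrix_herm (n : ℕ) (a b : ℝ) : (cycleMatrix n a b).IsHermitian := by
  ext i j
  rw [Matrix.conjTranspose_apply, cycleMatrix_eq_mEnt, cycleMatrix_eq_mEnt, mEnt_symm]
  simp

/-- positivity of the quadratic form, given positivity of the final coefficient. -/
lemma pos_of_EE (n : ℕ) (hn : 3 ≤ n) (a b : ℝ)
    (hE : 0 < 2 - a^2*((n:ℝ)-2)/((n:ℝ)-1) - ((n:ℝ)-1)*(b + a*(-1)^n/((n:ℝ)-1))^2/(n:ℝ))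
    (x : Fin n → ℝ) (hx : x ≠ 0) : 0 < Qf n a b (zf n x) := by
  have hν : (3:ℝ) ≤ (n:ℝ) := by exact_mod_cast hn
  set z := zf n x with hz
  by_contra hQ
  push_neg at hQ
  rw [sos_final n hn a b z] at hQ
  set EE := 2 - a^2*((n:ℝ)-2)/((n:ℝ)-1) - ((n:ℝ)-1)*(b + a*(-1)^n/((n:ℝ)-1))^2/(n:ℝ) with hEE
  set CC := ((n:ℝ)-1)*(b + a*(-1)^n/((n:ℝ)-1))/(n:ℝ) with hCC
  clear_value z EE CC
  have hterm : ∀ k ∈ range (n-2), 0 ≤ sosTerm n a z k := by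
    intro k _
    have : 0 < ddf k := by rw [ddf]; positivity
    rw [sosTerm]; positivity
  have hP : 0 ≤ ∑ k ∈ range (n-2), sosTerm n a z k := Finset.sum_nonneg hterm
  have hDpos : (0:ℝ) < (n:ℝ)/((n:ℝ)-1) := div_pos (by linarith) (by linarith)
  have hDt : 0 ≤ (n:ℝ)/((n:ℝ)-1) * (z (n-2) + CC * z (n-1))^2 :=
    mul_nonneg hDpos.le (sq_nonneg _)
  have hEt : 0 ≤ EE * z (n-1)^2 := mul_nonneg hE.le (sq_nonneg _)
  -- all three pieces are zero
  have hE0 : EE * z (n-1)^2 = 0 := by linarith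
  have hzn1 : z (n-1) = 0 := by
    rcases mul_eq_zero.1 hE0 with h | h
    · exact absurd h hE.ne'
    · exact pow_eq_zero_iff (by norm_num) |>.1 h
  have hD0 : (n:ℝ)/((n:ℝ)-1) * (z (n-2) + CC * z (n-1))^2 = 0 := by linarith
  have hzn2 : z (n-2) = 0 := by
    rcases mul_eq_zero.1 hD0 with h | h
    · exact absurd h hDpos.ne'
    · have := pow_eq_zero_iff (n := 2) (by norm_num) |>.1 h
      rw [hzn1, mul_zero, add_zero] at this; exact this
  have hP0 : ∑ k ∈ range (n-2), sosTerm n a z k = 0 := by linarith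
  have hek : ∀ k ∈ range (n-2), sosTerm n a z k = 0 :=
    (Finset.sum_eq_zero_iff_of_nonneg hterm).1 hP0
  have hrec : ∀ k, k < n-2 → z k = - (ccf k) * z (k+1) := by
    intro k hk
    have h := hek k (Finset.mem_range.2 hk)
    rw [sosTerm] at h
    have hdd : ddf k ≠ 0 := by rw [ddf]; positivity
    rcases mul_eq_zero.1 h with h' | h'
    · exact absurd h' hdd
    · have := pow_eq_zero_iff (n := 2) (by norm_num) |>.1 h'
      rw [hzn1, mul_zero, add_zero] at this
      linarith [this]
  have hall : ∀ j, j ≤ n-2 → z (n-2-j) = 0 := by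
    intro j
    induction j with
    | zero => intro _; simpa using hzn2
    | succ j ih =>
      intro hj
      have hlt : n-2-(j+1) < n-2 := by omega
      have hstep := hrec _ hlt
      have : n-2-(j+1)+1 = n-2-j := by omega
      rw [this] at hstep
      rw [hstep, ih (by omega), mul_zero]
  have hzero : ∀ i, i < n → z i = 0 := by
    intro i hi
    by_cases h : i = n-1
    · rw [h]; exact hzn1
    · have : i ≤ n-2 := by omega
      have := hall (n-2-i) (by omega)
      rwa [show n-2-(n-2-i) = i by omega] at this
  apply hx
  funext i
  have := hzero i i.isLt
  rw [hz, zf] at this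
  simpa [i.isLt] using this

set_option maxHeartbeats 1000000 in
/-- For every `n ≥ 3` one can choose `a`, `b` such that the cycle matrix `M_n` is
positive definite but loses positive definiteness when the corner entries are set
to zero. -/
theorem stmt_11 (n : ℕ) (hn : 3 ≤ n) :
    ∃ a b : ℝ, (cycleMatrix n a b).PosDef ∧ ¬ (cycleMatrix n 0 b).PosDef := by
  have hν : (3:ℝ) ≤ (n:ℝ) := by exact_mod_cast hn
  have h1 : ((n:ℝ)-1) ≠ 0 := by linarith
  have h0 : (n:ℝ) ≠ 0 := by linarith
  set b := Real.sqrt (2*(n:ℝ)/((n:ℝ)-1)) with hbdef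
  have hb2 : b^2 = 2*(n:ℝ)/((n:ℝ)-1) := Real.sq_sqrt (div_nonneg (by linarith) (by linarith))
  clear_value b
  refine ⟨-(-1:ℝ)^n * b / ((n:ℝ)-1), b, Matrix.PosDef.of_dotProduct_mulVec_pos (cycleMatrix_herm n _ b) ?_, ?_⟩
  · -- positive definiteness
    intro x hx
    have hst : star x = x := by
      funext i; simp
    rw [hst, form_eq_Qf n hn _ b x]
    apply pos_of_EE n hn _ b ?_ x hx
    have key : 2 - (-(-1:ℝ)^n * b / ((n:ℝ)-1))^2*((n:ℝ)-2)/((n:ℝ)-1)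
        - ((n:ℝ)-1)*(b + (-(-1:ℝ)^n * b / ((n:ℝ)-1))*(-1)^n/((n:ℝ)-1))^2/(n:ℝ)
        = 2/((n:ℝ)-1)^2 := by
      rcases Nat.even_or_odd n with hp | hp
      · rw [hp.neg_one_pow]
        field_simp
        ring_nf
        rw [hb2]
        field_simp
        ring
      · rw [hp.neg_one_pow]
        field_simp
        ring_nf
        rw [hb2]
        field_simp
        ring
    rw [key]
    positivity
  · -- not positive definite for a = 0
    intro hPD
    set y : Fin n → ℝ := fun i =>
      if (i:ℕ) = n-1 then -(-1:ℝ)^n else (-1:ℝ)^(i:ℕ) * b * ((i:ℕ)+1)/(n:ℝ) with hydef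
    have hylast : y ⟨n-1, by omega⟩ = -(-1:ℝ)^n := by
      rw [hydef]; simp
    have hy0 : y ≠ 0 := by
      intro h
      have h2 : y ⟨n-1, by omega⟩ = 0 := by rw [h]; rfl
      rw [hylast] at h2
      rcases Nat.even_or_odd n with hp | hp <;> rw [hp.neg_one_pow] at h2 <;> norm_num at h2
    have hpos := hPD.dotProduct_mulVec_pos hy0
    have hst : star y = y := by funext i; simp
    rw [hst, form_eq_Qf n hn 0 b y] at hpos
    -- value lemmas
    have hzval : ∀ k, k < n-1 → zf n y k = (-1:ℝ)^k * b * ((k:ℝ)+1)/(n:ℝ) := by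
      intro k hk
      have hval : y ⟨k, by omega⟩ = (-1:ℝ)^k * b * ((k:ℝ)+1)/(n:ℝ) := by
        rw [hydef]
        simp only [Fin.val_mk]
        rw [if_neg (by omega : ¬ k = n-1)]
      rw [zf, dif_pos (by omega : k < n), hval]
    have hzlast : zf n y (n-1) = -(-1:ℝ)^n := by
      rw [zf, dif_pos (by omega : n-1 < n)]
      exact hylast
    have c1 : ((n-2:ℕ):ℝ) = (n:ℝ)-2 := by
      rw [Nat.cast_sub (by omega : 2 ≤ n)]; norm_num
    have c2 : (-1:ℝ)^n = (-1)^(n-2) := by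
      conv_lhs => rw [show n = (n-2)+2 by omega]
      rw [pow_add]; norm_num
    have hQ0 : Qf n 0 b (zf n y) = 0 := by
      rw [sos_final n hn 0 b (zf n y)]
      have hA : ∀ k ∈ range (n-2), sosTerm n 0 (zf n y) k = 0 := by
        intro k hk
        have hk' := Finset.mem_range.1 hk
        rw [sosTerm]
        have e0 : eef 0 k = 0 := by rw [eef]; ring
        rw [e0, zero_mul, add_zero, hzval k (by omega), hzval (k+1) (by omega), ccf]
        have hk2 : ((k:ℝ)+2) ≠ 0 := by positivity
        push_cast
        have : (-1:ℝ)^k * b * ((k:ℝ)+1)/(n:ℝ)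
            + ((k:ℝ)+1)/((k:ℝ)+2) * ((-1:ℝ)^(k+1) * b * ((k:ℝ)+1+1)/(n:ℝ)) = 0 := by
          rw [pow_succ]
          field_simp
          ring
        rw [this]
        simp
      rw [Finset.sum_eq_zero hA]
      have hB : zf n y (n-2) + (((n:ℝ)-1)*(b + 0*(-1)^n/((n:ℝ)-1))/(n:ℝ)) * zf n y (n-1)
          = 0 := by
        rw [hzval (n-2) (by omega), hzlast, c1, c2]
        field_simp
        ring
      rw [hB]
      have hC : (2 - (0:ℝ)^2*((n:ℝ)-2)/((n:ℝ)-1)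
          - ((n:ℝ)-1)*(b + 0*(-1)^n/((n:ℝ)-1))^2/(n:ℝ)) = 0 := by
        have e : (2 - (0:ℝ)^2*((n:ℝ)-2)/((n:ℝ)-1)
            - ((n:ℝ)-1)*(b + 0*(-1)^n/((n:ℝ)-1))^2/(n:ℝ))
            = 2 - ((n:ℝ)-1)*b^2/(n:ℝ) := by ring
        rw [e, hb2]
        field_simp
        ring
      rw [hC]
      ring
    rw [hQ0] at hpos
    exact lt_irrefl 0 hpos
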